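/- For all t ∈ ℝ and all θ ∈ ℝ, cosh(dist(k_θ · (e^{−2t}·i), e^{−2t}·i)) = 1 + 2·sinh²(2t)·sin²(θ). -/

import Mathlib

open UpperHalfPlane

/-- The rotation matrix `[[cos θ, sin θ], [−sin θ, cos θ]]` as an element of `SL(2, ℝ)`. -/
noncomputable def rotSL (θ : ℝ) : Matrix.SpecialLinearGroup (Fin 2) ℝ :=
  ⟨!![Real.cos θ, Real.sin θ; -Real.sin θ, Real.cos θ], by
    rw [Matrix.det_fin_two_of]
    nlinarith [Real.sin_sq_add_cos_sq θ]⟩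

/-- The point `e^{−2t}·i` of the hyperbolic upper half-plane. -/
noncomputable def ptI (t : ℝ) : UpperHalfPlane :=
  ⟨⟨0, Real.exp (-(2 * t))⟩, by simpa using Real.exp_pos (-(2 * t))⟩

/-- Hyperbolic law of cosines computation:
`cosh (dist (k_θ · e^{−2t} i, e^{−2t} i)) = 1 + 2 sinh²(2t) sin²(θ)`. -/
theorem cosh_dist_rot_eq (t θ : ℝ) :
    Real.cosh (dist (rotSL θ • ptI t) (ptI t)) =
      1 + 2 * Real.sinh (2 * t) ^ 2 * Real.sin θ ^ 2 := by
  set y := Real.exp (-(2 * t)) with hy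
  set c := Real.cos θ
  set s := Real.sin θ
  have hypos : (0:ℝ) < y := Real.exp_pos _
  have hcs : c ^ 2 + s ^ 2 = 1 := by rw [add_comm]; exact Real.sin_sq_add_cos_sq θ
  have hc2 : c ^ 2 = 1 - s ^ 2 := by linarith
  have hD : (0:ℝ) < c ^ 2 + s ^ 2 * y ^ 2 := by nlinarith [sq_nonneg c, sq_nonneg (s*y)]
  have hnum : num (rotSL θ) (ptI t) = Complex.mk s (c * y) := by
    simp [num, rotSL, ptI, Complex.ext_iff, UpperHalfPlane.coe,
      Matrix.SpecialLinearGroup.coe_GL_coe_matrix, Complex.cos_ofReal_re, Complex.sin_ofReal_re]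
    exact ⟨rfl, rfl⟩
  have hden : denom (rotSL θ) (ptI t) = Complex.mk c (-(s * y)) := by
    simp [denom, rotSL, ptI, Complex.ext_iff, UpperHalfPlane.coe,
      Matrix.SpecialLinearGroup.coe_GL_coe_matrix, Complex.cos_ofReal_re, Complex.sin_ofReal_re]
    refine ⟨rfl, ?_⟩
    show -Real.sin θ * Real.exp (-(2 * t)) = -(s * y)
    ring
  have hw : ((rotSL θ • ptI t : ℍ) : ℂ) = num (rotSL θ) (ptI t) / denom (rotSL θ) (ptI t) :=
    coe_smul_of_det_pos (g := Matrix.SpecialLinearGroup.toGL (rotSL θ)) (by simp) _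
  rw [hnum, hden] at hw
  have hwre : ((rotSL θ • ptI t : ℍ) : ℂ).re = s * c * (1 - y ^ 2) / (c ^ 2 + s ^ 2 * y ^ 2) := by
    rw [hw, Complex.div_re, Complex.normSq_mk]
    dsimp only
    rw [← add_div]
    congr 1 <;> ring
  have hwim : ((rotSL θ • ptI t : ℍ) : ℂ).im = y / (c ^ 2 + s ^ 2 * y ^ 2) := by
    rw [hw, Complex.div_im, Complex.normSq_mk]
    dsimp only
    rw [div_sub_div_same]
    congr 1
    · linear_combination y * hcs
    · ring
  have him : (rotSL θ • ptI t).im = y / (c ^ 2 + s ^ 2 * y ^ 2) := by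
    rw [← UpperHalfPlane.coe_im]; exact hwim
  have hre : (rotSL θ • ptI t).re = s * c * (1 - y ^ 2) / (c ^ 2 + s ^ 2 * y ^ 2) := by
    rw [← UpperHalfPlane.coe_re]; exact hwre
  have hptim : (ptI t).im = y := rfl
  have hptre : (ptI t).re = 0 := rfl
  have hsinh : Real.sinh (2 * t) = (1 - y ^ 2) / (2 * y) := by
    rw [eq_div_iff (by positivity), Real.sinh_eq, hy]
    have h2 : Real.exp (2 * t) * Real.exp (-(2 * t)) = 1 := by
      rw [← Real.exp_add]; simp
    nlinarith [h2]
  rw [UpperHalfPlane.cosh_dist, Complex.dist_eq_re_im, Real.sq_sqrt (by positivity)]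
  rw [UpperHalfPlane.coe_re, UpperHalfPlane.coe_im, UpperHalfPlane.coe_re,
    UpperHalfPlane.coe_im, hre, him, hptre, hptim, hsinh, sub_zero, hc2]
  have hA2 : (s * c * (1 - y ^ 2) / (1 - s ^ 2 + s ^ 2 * y ^ 2)) ^ 2 =
      s ^ 2 * (1 - s ^ 2) * (1 - y ^ 2) ^ 2 / (1 - s ^ 2 + s ^ 2 * y ^ 2) ^ 2 := by
    rw [div_pow]
    congr 1
    linear_combination (s ^ 2 * (1 - y ^ 2) ^ 2) * hc2
  rw [hA2]
  have hDne : (1 : ℝ) - s ^ 2 + s ^ 2 * y ^ 2 ≠ 0 := by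
    have : (0:ℝ) < 1 - s ^ 2 + s ^ 2 * y ^ 2 := by rw [← hc2]; linarith [hD]
    exact ne_of_gt this
  field_simp
  ring
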